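/- If M(z) is an N×N multivariate para-unitary matrix whose entries are generating functions of arrays f_{i,j}: (ZMod p)^m → ZMod q, then any two distinct rows are mutually orthogonal complementary array sets: for all i ≠ i' and all shifts τ, Σ_{j=0}^{N-1} C_{f_{i,j}, f_{i',j}}(τ) = 0. -/

import Mathlib

open scoped BigOperators

noncomputable def omg (q : ℕ) : ℂ := Complex.exp (2 * Real.pi * Complex.I / q)

noncomputable def ec (q : ℕ) (a : ZMod q) : ℂ := omg q ^ a.val

/-- Aperiodic cross-correlation of arrays `(ZMod p)^m → ZMod q` at integer shift `τ`. -/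
noncomputable def pcorr (q p m : ℕ) [NeZero p]
    (f1 f2 : (Fin m → ZMod p) → ZMod q) (τ : Fin m → ℤ) : ℂ :=
  ∑ y : Fin m → ZMod p, ∑ y' : Fin m → ZMod p,
    if ∀ k, ((y k).val : ℤ) = ((y' k).val : ℤ) + τ k then ec q (f1 y - f2 y') else 0

noncomputable def genMat (q p m N : ℕ) [NeZero p]
    (f : Fin N → Fin N → (Fin m → ZMod p) → ZMod q) (z : Fin m → ℂ) :
    Matrix (Fin N) (Fin N) ℂ :=
  fun i j => ∑ y : Fin m → ZMod p, ec q (f i j y) * ∏ k, z k ^ (y k).val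

noncomputable def genMatDag (q p m N : ℕ) [NeZero p]
    (f : Fin N → Fin N → (Fin m → ZMod p) → ZMod q) (z : Fin m → ℂ) :
    Matrix (Fin N) (Fin N) ℂ :=
  fun i j => ∑ y : Fin m → ZMod p, ec q (-(f j i y)) * ∏ k, z k ^ (y k).val

lemma omg_ne_zero (n : ℕ) : omg n ≠ 0 := Complex.exp_ne_zero _

lemma omg_prim (n : ℕ) (hn : n ≠ 0) : IsPrimitiveRoot (omg n) n := by
  have h := Complex.isPrimitiveRoot_exp n hn
  convert h using 2
  rfl

lemma omg_pow_self (n : ℕ) (hn : n ≠ 0) : omg n ^ n = 1 := (omg_prim n hn).pow_eq_one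

lemma pow_congr_mod (u : ℂ) (n : ℕ) (hu : u ^ n = 1) (a : ℕ) : u ^ a = u ^ (a % n) := by
  conv_lhs => rw [← Nat.div_add_mod a n]
  rw [pow_add, pow_mul, hu, one_pow, one_mul]

lemma ec_add (q : ℕ) (hq : 0 < q) (a b : ZMod q) :
    ec q (a + b) = ec q a * ec q b := by
  haveI : NeZero q := ⟨hq.ne'⟩
  unfold ec
  rw [← pow_add, ZMod.val_add, ← pow_congr_mod _ _ (omg_pow_self q hq.ne')]

lemma sum_pow_zero (n : ℕ) (hn : 0 < n) (d : ℤ) (hd : ¬ (n:ℤ) ∣ d) :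
    ∑ s ∈ Finset.range n, (omg n ^ d) ^ s = 0 := by
  have h1 : omg n ^ d ≠ 1 := fun h =>
    hd (((omg_prim n hn.ne').zpow_eq_one_iff_dvd d).mp h)
  rw [geom_sum_eq h1]
  have : (omg n ^ d) ^ n = 1 := by
    rw [← zpow_natCast, ← zpow_mul, mul_comm, zpow_mul, zpow_natCast,
      omg_pow_self n hn.ne', one_zpow]
  simp [this]

/-- single-variable Fourier orthogonality -/
lemma fourier_single (n : ℕ) (hn : 0 < n) (d : ℤ) (hd : |d| < n) :
    ∑ s : Fin n, (omg n ^ d) ^ (s : ℕ) = if d = 0 then (n : ℂ) else 0 := by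
  rw [Fin.sum_univ_eq_sum_range (fun s => (omg n ^ d) ^ s) n]
  by_cases h0 : d = 0
  · simp [h0]
  · rw [if_neg h0]
    apply sum_pow_zero n hn
    intro hdvd
    have h1 : (n:ℤ) ∣ |d| := (dvd_abs _ _).mpr hdvd
    have h2 : (n:ℤ) ≤ |d| := Int.le_of_dvd (abs_pos.mpr h0) h1
    omega

/-- If the generating matrix of `f` is para-unitary, any two distinct rows are
mutually orthogonal complementary array sets. -/
theorem stmt6 (q p m N : ℕ) [NeZero p] (hq : 0 < q)
    (f : Fin N → Fin N → (Fin m → ZMod p) → ZMod q) (c : ℝ)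
    (hPU : ∀ z : Fin m → ℂ, (∀ k, z k ≠ 0) →
      genMat q p m N f z * genMatDag q p m N f (fun k => (z k)⁻¹) =
        (c : ℂ) • (1 : Matrix (Fin N) (Fin N) ℂ)) :
    ∀ i i' : Fin N, i ≠ i' → ∀ τ : Fin m → ℤ,
      ∑ j : Fin N, pcorr q p m (f i j) (f i' j) τ = 0 := by
  intro i i' hne τ
  classical
  have hp : 0 < p := Nat.pos_of_ne_zero (NeZero.ne p)
  have hvlt : ∀ (y : Fin m → ZMod p) (k : Fin m), (y k).val < p :=
    fun y k => ZMod.val_lt (y k)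
  by_cases hτ : ∀ k, -(p:ℤ) < τ k ∧ τ k < p
  · -- main case
    set n := 2*p - 1 with hn_def
    have hn : 0 < n := by omega
    set ζ := omg n with hζ
    have hζ0 : ζ ≠ 0 := omg_ne_zero n
    -- shorthand
    set D : (Fin m → ZMod p) → (Fin m → ZMod p) → Fin m → ℤ :=
      fun y y' k => ((y k).val : ℤ) - ((y' k).val : ℤ) - τ k with hD
    set E : Fin N → (Fin m → ZMod p) → (Fin m → ZMod p) → ℂ :=
      fun j y y' => ec q (f i j y) * ec q (-(f i' j y')) with hE
    have hDlt : ∀ y y' k, |D y y' k| < (n:ℤ) := by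
      intro y y' k
      have h1 := hvlt y k
      have h2 := hvlt y' k
      have h3 := hτ k
      simp only [hD]
      rw [abs_lt]
      omega
    -- Claim A : evaluation at roots of unity
    have hA : ∀ t : Fin m → Fin n,
        ∑ j : Fin N, ∑ y : Fin m → ZMod p, ∑ y' : Fin m → ZMod p,
          E j y y' * ∏ k, ζ ^ (((t k : ℕ) : ℤ) * D y y' k) = 0 := by
      intro t
      have hz : ∀ k, (fun k => ζ ^ (t k : ℕ)) k ≠ 0 := fun k => pow_ne_zero _ hζ0
      have h0 := congrFun (congrFun (hPU (fun k => ζ ^ (t k : ℕ)) hz) i) i'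
      rw [Matrix.mul_apply] at h0
      simp only [Matrix.smul_apply, Matrix.one_apply_ne hne, smul_zero] at h0
      -- h0 : ∑ j, genMat .. i j * genMatDag .. j i' = 0
      have h1 := congrArg (fun x => x * ∏ k, ζ ^ (-((t k : ℕ) : ℤ) * τ k)) h0
      simp only [zero_mul] at h1
      rw [← h1]
      rw [Finset.sum_mul]
      apply Finset.sum_congr rfl
      intro j _
      simp only [genMat, genMatDag]
      rw [Finset.sum_mul_sum, Finset.sum_mul]
      apply Finset.sum_congr rfl
      intro y _
      rw [Finset.sum_mul]
      apply Finset.sum_congr rfl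
      intro y' _
      simp only [hE]
      have key : (∏ k, (ζ ^ (t k : ℕ)) ^ (y k).val) *
          (∏ k, ((ζ ^ (t k : ℕ))⁻¹) ^ (y' k).val) *
          (∏ k, ζ ^ (-((t k : ℕ) : ℤ) * τ k)) =
          ∏ k, ζ ^ (((t k : ℕ) : ℤ) * D y y' k) := by
        rw [← Finset.prod_mul_distrib, ← Finset.prod_mul_distrib]
        apply Finset.prod_congr rfl
        intro k _
        rw [← pow_mul, inv_pow, ← pow_mul, ← zpow_natCast ζ ((t k : ℕ) * (y k).val),
          ← zpow_natCast ζ ((t k : ℕ) * (y' k).val), ← zpow_neg,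
          ← zpow_add₀ hζ0, ← zpow_add₀ hζ0]
        congr 1
        simp only [hD]
        push_cast
        ring
      rw [← key]
      ring
    -- Claim B : Fourier inversion
    have hB : ∀ (y y' : Fin m → ZMod p),
        ∑ t : Fin m → Fin n, ∏ k, ζ ^ (((t k : ℕ) : ℤ) * D y y' k) =
          if ∀ k, D y y' k = 0 then ((n:ℂ)) ^ m else 0 := by
      intro y y'
      have hfac : ∀ (t : Fin m → Fin n) (k : Fin m),
          ζ ^ (((t k : ℕ) : ℤ) * D y y' k) = (ζ ^ D y y' k) ^ ((t k : ℕ)) := by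
        intro t k
        rw [mul_comm, zpow_mul, zpow_natCast]
      simp_rw [hfac]
      rw [← Fintype.prod_sum (fun k (s : Fin n) => (ζ ^ D y y' k) ^ (s : ℕ))]
      have heach : ∀ k, ∑ s : Fin n, (ζ ^ D y y' k) ^ (s : ℕ) =
          if D y y' k = 0 then (n:ℂ) else 0 :=
        fun k => fourier_single n hn _ (hDlt y y' k)
      simp_rw [heach]
      by_cases hDz : ∀ k, D y y' k = 0
      · simp [hDz, Finset.prod_const, Finset.card_univ]
      · push_neg at hDz
        obtain ⟨k0, hk0⟩ := hDz
        rw [if_neg (by intro h; exact hk0 (h k0))]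
        exact Finset.prod_eq_zero (Finset.mem_univ k0) (by rw [if_neg hk0])
    -- combine
    have hsum : (0:ℂ) = ∑ t : Fin m → Fin n, ∑ j : Fin N,
        ∑ y : Fin m → ZMod p, ∑ y' : Fin m → ZMod p,
          E j y y' * ∏ k, ζ ^ (((t k : ℕ) : ℤ) * D y y' k) := by
      rw [Finset.sum_congr rfl (fun t _ => hA t)]
      simp
    rw [Finset.sum_comm] at hsum
    have hswap : ∀ j : Fin N, ∑ t : Fin m → Fin n,
        ∑ y : Fin m → ZMod p, ∑ y' : Fin m → ZMod p,
          E j y y' * ∏ k, ζ ^ (((t k : ℕ) : ℤ) * D y y' k) =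
        ((n:ℂ)) ^ m * pcorr q p m (f i j) (f i' j) τ := by
      intro j
      rw [Finset.sum_comm]
      unfold pcorr
      rw [Finset.mul_sum]
      apply Finset.sum_congr rfl
      intro y _
      rw [Finset.sum_comm, Finset.mul_sum]
      apply Finset.sum_congr rfl
      intro y' _
      rw [← Finset.mul_sum, hB y y']
      have hcond : (∀ k, D y y' k = 0) ↔
          (∀ k, ((y k).val : ℤ) = ((y' k).val : ℤ) + τ k) := by
        constructor <;> intro h k <;> have := h k <;> simp only [hD] at * <;> omega
      by_cases hc : ∀ k, ((y k).val : ℤ) = ((y' k).val : ℤ) + τ k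
      · rw [if_pos (hcond.mpr hc), if_pos hc]
        have : E j y y' = ec q (f i j y - f i' j y') := by
          rw [sub_eq_add_neg, ec_add q hq]
        rw [this]; ring
      · rw [if_neg (fun h => hc (hcond.mp h)), if_neg hc]
        ring
    rw [Finset.sum_congr rfl (fun j _ => hswap j), ← Finset.mul_sum] at hsum
    have hn0 : ((n:ℂ)) ^ m ≠ 0 := by
      apply pow_ne_zero
      exact_mod_cast hn.ne'
    exact (mul_eq_zero.mp hsum.symm).resolve_left hn0
  · -- out-of-range shift : each pcorr vanishes
    push_neg at hτ
    apply Finset.sum_eq_zero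
    intro j _
    unfold pcorr
    apply Finset.sum_eq_zero
    intro y _
    apply Finset.sum_eq_zero
    intro y' _
    rw [if_neg]
    intro h
    obtain ⟨k, hk⟩ := hτ
    have h1 := hvlt y k
    have h2 := hvlt y' k
    have h3 := h k
    rcases hk (by omega) with h4
    omega
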